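/- Let P_G = P_{G_+} ∪ P_{G_-} be a decomposition of the edge polytope of a finite connected simple graph G. Then P_G is normal if and only if both P_{G_+} and P_{G_-} are normal. Equivalently (via the odd cycle criterion): G satisfies the odd cycle condition if and only if both G_+ and G_- do. -/

import Mathlib

open scoped Pointwise

open scoped BigOperators

/-- `ρ(i,j) = e_i + e_j` -/
noncomputable def rho {d : ℕ} (i j : Fin d) : Fin d → ℝ :=
  fun t => (if t = i then 1 else 0) + (if t = j then 1 else 0)

/-- The edge polytope of a graph `G` on `[d]`. -/
noncomputable def edgePolytope {d : ℕ} (G : SimpleGraph (Fin d)) : Set (Fin d → ℝ) :=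
  convexHull ℝ {x | ∃ i j, G.Adj i j ∧ x = rho i j}

/-- dot product -/
def dotp {d : ℕ} (a x : Fin d → ℝ) : ℝ := ∑ t, a t * x t

/-- a polytope is integral if all its vertices (extreme points) are lattice points -/
def IsIntegralSet {d : ℕ} (P : Set (Fin d → ℝ)) : Prop :=
  ∀ x ∈ Set.extremePoints ℝ P, ∀ t, ∃ z : ℤ, x t = (z : ℝ)

/-- The hyperplane `a·x = b` decomposes `P`: it meets the relative interior of `P`,
both open sides meet `P`, and both closed half-space pieces are integral. -/
def Decomposes {d : ℕ} (P : Set (Fin d → ℝ)) (a : Fin d → ℝ) (b : ℝ) : Prop :=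
  (∃ x ∈ intrinsicInterior ℝ P, dotp a x = b) ∧
  (∃ y ∈ P, dotp a y < b) ∧ (∃ y ∈ P, b < dotp a y) ∧
  IsIntegralSet (P ∩ {x | b ≤ dotp a x}) ∧
  IsIntegralSet (P ∩ {x | dotp a x ≤ b})

/-- An integral polytope P is normal: every lattice point of N*P is a sum of N lattice
points of P. -/
def IsNormalPolytope {d : ℕ} (P : Set (Fin d → ℝ)) : Prop :=
  ∀ N : ℕ, 0 < N → ∀ x : Fin d → ℝ, x ∈ (N : ℝ) • P → (∀ t, ∃ z : ℤ, x t = (z : ℝ)) →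
    ∃ f : Fin N → (Fin d → ℝ),
      (∀ m, f m ∈ P ∧ ∀ t, ∃ z : ℤ, f m t = (z : ℝ)) ∧ x = ∑ m, f m

section Aux
variable {d : ℕ}

lemma rho_comm (i j : Fin d) : rho i j = rho j i := by
  funext t; simp [rho, add_comm]

lemma rho_lattice (i j : Fin d) : ∀ t, ∃ z : ℤ, rho i j t = (z : ℝ) := by
  intro t
  refine ⟨(if t = i then 1 else 0) + (if t = j then 1 else 0), ?_⟩
  simp only [rho]
  split_ifs <;> norm_num

lemma dotp_isLinearMap (a : Fin d → ℝ) : IsLinearMap ℝ (dotp a) := by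
  constructor
  · intro x y; simp [dotp, mul_add, Finset.sum_add_distrib]
  · intro c x
    simp only [dotp, smul_eq_mul, Finset.mul_sum, Pi.smul_apply]
    exact Finset.sum_congr rfl fun t _ => by ring

lemma dotp_rho (a : Fin d → ℝ) (i j : Fin d) : dotp a (rho i j) = a i + a j := by
  simp [dotp, rho, mul_add, Finset.sum_add_distrib, mul_ite, mul_one, mul_zero,
    Finset.sum_ite_eq', Finset.mem_univ]

lemma dotp_sum {N : ℕ} (a : Fin d → ℝ) (f : Fin N → Fin d → ℝ) :
    dotp a (∑ m, f m) = ∑ m, dotp a (f m) := by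
  simp only [dotp, Finset.sum_apply, Finset.mul_sum]
  exact Finset.sum_comm

lemma dotp_smul (a : Fin d → ℝ) (c : ℝ) (x : Fin d → ℝ) :
    dotp a (c • x) = c * dotp a x := (dotp_isLinearMap a).map_smul c x

lemma dotp_comb (a : Fin d → ℝ) (α β : ℝ) (y z : Fin d → ℝ) :
    dotp a (α • y + β • z) = α * dotp a y + β * dotp a z := by
  rw [(dotp_isLinearMap a).map_add, dotp_smul, dotp_smul]

lemma dotp_neg (a x : Fin d → ℝ) : dotp (-a) x = - dotp a x := by
  simp [dotp]

lemma dotp_continuous (a : Fin d → ℝ) : Continuous fun y : Fin d → ℝ => dotp a y := by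
  unfold dotp
  exact continuous_finset_sum _ fun t _ => continuous_const.mul (continuous_apply t)

lemma edgeSet_finite (Q : Fin d → Fin d → Prop) :
    {x : Fin d → ℝ | ∃ i j, Q i j ∧ x = rho i j}.Finite := by
  apply Set.Finite.subset (Set.finite_range (fun p : Fin d × Fin d => rho p.1 p.2))
  rintro x ⟨i, j, -, rfl⟩; exact ⟨(i, j), rfl⟩

end Aux

section Aux2
variable {d : ℕ}

lemma subset_hull_of_extreme {K T : Set (Fin d → ℝ)} (hKc : IsCompact K)
    (hKconv : Convex ℝ K) (hT : T.Finite) (h : Set.extremePoints ℝ K ⊆ T) :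
    K ⊆ convexHull ℝ T := by
  intro x hx
  have h1 := closure_convexHull_extremePoints hKc hKconv
  rw [← h1] at hx
  have h2 : closure (convexHull ℝ (Set.extremePoints ℝ K)) ⊆ closure (convexHull ℝ T) :=
    closure_mono (convexHull_mono h)
  have h3 : closure (convexHull ℝ T) = convexHull ℝ T :=
    IsClosed.closure_eq (hT.isCompact_convexHull ℝ).isClosed
  exact h3 ▸ h2 hx

lemma ext_face {K : Set (Fin d → ℝ)} {a : Fin d → ℝ} (hpos : ∀ y ∈ K, 0 ≤ dotp a y) :
    Set.extremePoints ℝ (K ∩ {x | dotp a x ≤ 0}) ⊆ Set.extremePoints ℝ K := by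
  rintro x ⟨⟨hxK, hx0'⟩, hext⟩
  have hx0 : dotp a x = 0 := le_antisymm hx0' (hpos x hxK)
  refine ⟨hxK, fun y hy z hz hseg => ?_⟩
  obtain ⟨α, β, hα, hβ, hαβ, hcomb⟩ := hseg
  have h1 : α * dotp a y + β * dotp a z = 0 := by rw [← dotp_comb, hcomb, hx0]
  have h2 := hpos y hy
  have h3 := hpos z hz
  have hy0 : dotp a y = 0 := by nlinarith
  have hz0 : dotp a z = 0 := by nlinarith
  exact hext ⟨hy, hy0.le⟩ ⟨hz, hz0.le⟩ ⟨α, β, hα, hβ, hαβ, hcomb⟩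

lemma mem_edgePolytope_bounds (G : SimpleGraph (Fin d)) {y : Fin d → ℝ}
    (hy : y ∈ edgePolytope G) : (∀ t, 0 ≤ y t ∧ y t ≤ 1) ∧ ∑ t, y t = 2 := by
  classical
  suffices h : edgePolytope G ⊆ {y | (∀ t, 0 ≤ y t ∧ y t ≤ 1) ∧ ∑ t, y t = 2} by
    exact h hy
  refine convexHull_min ?_ ?_
  · rintro z ⟨i, j, hadj, rfl⟩
    have hij := G.ne_of_adj hadj
    constructor
    · intro t
      constructor
      · simp only [rho]; split_ifs <;> norm_num
      · simp only [rho]; split_ifs with h1 h2 h2 <;> try norm_num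
        exact absurd (h1 ▸ h2 : (i:Fin d) = j) hij
    · simp only [rho, Finset.sum_add_distrib]
      rw [Finset.sum_ite_eq' Finset.univ i (fun _ => (1:ℝ)), Finset.sum_ite_eq' Finset.univ j
        (fun _ => (1:ℝ))]
      norm_num
  · intro y hy' z hz' u v hu hv huv
    simp only [Set.mem_setOf_eq] at hy' hz' ⊢
    refine ⟨fun t => ?_, ?_⟩
    · have h1 := (hy'.1 t).1
      have h2 := (hy'.1 t).2
      have h3 := (hz'.1 t).1
      have h4 := (hz'.1 t).2
      constructor
      · have : (u • y + v • z) t = u * y t + v * z t := by simp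
        rw [this]; nlinarith
      · have : (u • y + v • z) t = u * y t + v * z t := by simp
        rw [this]; nlinarith
    · have : ∑ t, (u • y + v • z) t = u * (∑ t, y t) + v * (∑ t, z t) := by
        simp [Finset.sum_add_distrib, Finset.mul_sum]
      rw [this, hy'.2, hz'.2]; linarith

lemma lattice_of_mem_hull (G : SimpleGraph (Fin d)) {x : Fin d → ℝ}
    (hx : x ∈ edgePolytope G) (hint : ∀ t, ∃ z : ℤ, x t = (z : ℝ)) :
    ∃ i j, G.Adj i j ∧ x = rho i j := by
  classical
  obtain ⟨hb, hsum2⟩ := mem_edgePolytope_bounds G hx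
  have h01 : ∀ t, x t = 0 ∨ x t = 1 := by
    intro t
    obtain ⟨z, hzt⟩ := hint t
    have h1 := (hb t).1
    have h2 := (hb t).2
    rw [hzt] at h1 h2 ⊢
    have hz1 : (0:ℤ) ≤ z := by exact_mod_cast h1
    have hz2 : z ≤ 1 := by exact_mod_cast h2
    have : z = 0 ∨ z = 1 := by omega
    rcases this with rfl | rfl <;> simp
  set s := Finset.univ.filter (fun t => x t = 1) with hs
  have hcard : s.card = 2 := by
    have he : ∑ t, x t = (s.card : ℝ) := by
      rw [hs, ← Finset.sum_boole]
      refine Finset.sum_congr rfl fun t _ => ?_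
      rcases h01 t with h | h <;> simp [h]
    rw [hsum2] at he
    exact_mod_cast he.symm
  obtain ⟨i, j, hij, hsij⟩ := Finset.card_eq_two.mp hcard
  have hmem : ∀ t, t ∈ s ↔ x t = 1 := by intro t; simp [hs]
  have hxi : x i = 1 := (hmem i).mp (by rw [hsij]; exact Finset.mem_insert_self _ _)
  have hxj : x j = 1 := (hmem j).mp (by rw [hsij]; simp)
  have hxr : x = rho i j := by
    funext t
    by_cases hti : t = i
    · subst hti; simp [rho, hij, hxi]
    · by_cases htj : t = j
      · subst htj; simp [rho, hti, hxj]
      · have : t ∉ s := by rw [hsij]; simp [hti, htj]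
        have hx0 : x t ≠ 1 := fun h => this ((hmem t).mpr h)
        have : x t = 0 := (h01 t).resolve_right hx0
        simp [rho, hti, htj, this]
  by_cases hadj : G.Adj i j
  · exact ⟨i, j, hadj, hxr⟩
  · exfalso
    set c : Fin d → ℝ := fun t => if t = i ∨ t = j then 1 else 0 with hc
    have hbd : edgePolytope G ⊆ {y | dotp c y ≤ 1} := by
      apply convexHull_min ?_ (convex_halfSpace_le (dotp_isLinearMap c) 1)
      rintro y ⟨p, q, hpq, rfl⟩
      have hpq' := G.ne_of_adj hpq
      rw [Set.mem_setOf_eq, dotp_rho]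
      by_cases hp : p = i ∨ p = j <;> by_cases hq : q = i ∨ q = j
      · exfalso
        rcases hp with rfl | rfl <;> rcases hq with rfl | rfl
        · exact hpq' rfl
        · exact hadj hpq
        · exact hadj hpq.symm
        · exact hpq' rfl
      · simp [hc, hp, hq]
      · simp [hc, hp, hq]
      · simp [hc, hp, hq]
    have h2 : dotp c x ≤ 1 := hbd hx
    have h3 : dotp c x = 2 := by
      rw [hxr, dotp_rho, hc]
      simp [hij]
      norm_num
    linarith

end Aux2

section Aux3
variable {d : ℕ}

lemma edgeSet_finite2 (Q R : Fin d → Fin d → Prop) :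
    {x : Fin d → ℝ | ∃ i j, Q i j ∧ R i j ∧ x = rho i j}.Finite := by
  apply Set.Finite.subset (Set.finite_range (fun p : Fin d × Fin d => rho p.1 p.2))
  rintro x ⟨i, j, -, -, rfl⟩; exact ⟨(i, j), rfl⟩

lemma half_eq (G : SimpleGraph (Fin d)) (a : Fin d → ℝ)
    (hint : IsIntegralSet (edgePolytope G ∩ {x | 0 ≤ dotp a x})) :
    edgePolytope G ∩ {x | 0 ≤ dotp a x}
      = edgePolytope (SimpleGraph.fromRel fun i j => G.Adj i j ∧ 0 ≤ a i + a j) := by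
  apply Set.Subset.antisymm
  · apply subset_hull_of_extreme
    · exact IsCompact.inter_right ((edgeSet_finite _).isCompact_convexHull ℝ)
        (isClosed_le continuous_const (dotp_continuous a))
    · exact (convex_convexHull ℝ _).inter (convex_halfSpace_ge (dotp_isLinearMap a) 0)
    · exact edgeSet_finite _
    · intro y hy
      have hyK := extremePoints_subset hy
      obtain ⟨i, j, hadj, rfl⟩ := lattice_of_mem_hull G hyK.1 (hint y hy)
      refine ⟨i, j, ?_, rfl⟩
      rw [SimpleGraph.fromRel_adj]
      refine ⟨G.ne_of_adj hadj, Or.inl ⟨hadj, ?_⟩⟩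
      have h2 := hyK.2
      rwa [Set.mem_setOf_eq, dotp_rho] at h2
  · apply convexHull_min
    · rintro y ⟨i, j, hadj, rfl⟩
      rw [SimpleGraph.fromRel_adj] at hadj
      obtain ⟨hne, h | h⟩ := hadj
      · exact ⟨subset_convexHull ℝ _ ⟨i, j, h.1, rfl⟩,
          by rw [Set.mem_setOf_eq, dotp_rho]; exact h.2⟩
      · refine ⟨subset_convexHull ℝ _ ⟨i, j, h.1.symm, rfl⟩, ?_⟩
        rw [Set.mem_setOf_eq, dotp_rho]; linarith [h.2]
    · exact (convex_convexHull ℝ _).inter (convex_halfSpace_ge (dotp_isLinearMap a) 0)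

lemma zero_subset (G : SimpleGraph (Fin d)) (a : Fin d → ℝ)
    (hint : IsIntegralSet (edgePolytope G ∩ {x | 0 ≤ dotp a x})) :
    edgePolytope G ∩ {x | dotp a x = 0}
      ⊆ convexHull ℝ {x | ∃ i j, G.Adj i j ∧ a i + a j = 0 ∧ x = rho i j} := by
  have hK0 : edgePolytope G ∩ {x | dotp a x = 0}
      = (edgePolytope G ∩ {x | 0 ≤ dotp a x}) ∩ {x | dotp a x ≤ 0} := by
    ext y
    simp only [Set.mem_inter_iff, Set.mem_setOf_eq]
    constructor
    · rintro ⟨h1, h2⟩; exact ⟨⟨h1, h2.ge⟩, h2.le⟩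
    · rintro ⟨⟨h1, h2⟩, h3⟩; exact ⟨h1, le_antisymm h3 h2⟩
  rw [hK0]
  apply subset_hull_of_extreme
  · exact IsCompact.inter_right
      (IsCompact.inter_right ((edgeSet_finite _).isCompact_convexHull ℝ)
        (isClosed_le continuous_const (dotp_continuous a)))
      (isClosed_le (dotp_continuous a) continuous_const)
  · exact ((convex_convexHull ℝ _).inter (convex_halfSpace_ge (dotp_isLinearMap a) 0)).inter
      (convex_halfSpace_le (dotp_isLinearMap a) 0)
  · exact edgeSet_finite2 _ _
  · intro y hy
    have hy' : y ∈ Set.extremePoints ℝ (edgePolytope G ∩ {x | 0 ≤ dotp a x}) :=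
      ext_face (fun z hz => hz.2) hy
    have hyK := extremePoints_subset hy'
    obtain ⟨i, j, hadj, rfl⟩ := lattice_of_mem_hull G hyK.1 (hint y hy')
    have h0le : (0:ℝ) ≤ dotp a (rho i j) := hyK.2
    have hle0 : dotp a (rho i j) ≤ 0 := (extremePoints_subset hy).2
    refine ⟨i, j, hadj, ?_, rfl⟩
    rw [dotp_rho] at h0le hle0
    linarith

lemma no_hull (G : SimpleGraph (Fin d)) (a : Fin d → ℝ)
    (hz : edgePolytope G ∩ {x | dotp a x = 0}
      ⊆ convexHull ℝ {x | ∃ i j, G.Adj i j ∧ a i + a j = 0 ∧ x = rho i j})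
    (c : Fin d → ℝ) (b : ℝ)
    (hbound : ∀ p q, G.Adj p q → a p + a q = 0 → c p + c q ≤ b)
    {w : Fin d → ℝ} (hwP : w ∈ edgePolytope G) (hw0 : dotp a w = 0)
    (hcw : b < dotp c w) : False := by
  have h1 : convexHull ℝ {x | ∃ i j, G.Adj i j ∧ a i + a j = 0 ∧ x = rho i j}
      ⊆ {y | dotp c y ≤ b} := by
    apply convexHull_min ?_ (convex_halfSpace_le (dotp_isLinearMap c) b)
    rintro y ⟨p, q, hpq, hz0, rfl⟩
    rw [Set.mem_setOf_eq, dotp_rho]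
    exact hbound p q hpq hz0
  have h2 : dotp c w ≤ b := h1 (hz ⟨hwP, hw0⟩)
  linarith

end Aux3

section Aux4
variable {d : ℕ}

lemma mem_edgePolytope_of_adj {G : SimpleGraph (Fin d)} {i j : Fin d} (h : G.Adj i j) :
    rho i j ∈ edgePolytope G :=
  subset_convexHull ℝ {x | ∃ i j, G.Adj i j ∧ x = rho i j} ⟨i, j, h, rfl⟩

lemma comb_mem_edgePolytope {G : SimpleGraph (Fin d)} {i j k l : Fin d}
    (h1 : G.Adj i j) (h2 : G.Adj k l) {lam : ℝ} (h0 : 0 ≤ lam) (h1' : lam ≤ 1) :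
    lam • rho i j + (1 - lam) • rho k l ∈ edgePolytope G :=
  (convex_convexHull ℝ _) (mem_edgePolytope_of_adj h1) (mem_edgePolytope_of_adj h2)
    h0 (by linarith) (by ring)

lemma no_mixed_shared (G : SimpleGraph (Fin d)) (a : Fin d → ℝ)
    (hz : edgePolytope G ∩ {x | dotp a x = 0}
      ⊆ convexHull ℝ {x | ∃ i j, G.Adj i j ∧ a i + a j = 0 ∧ x = rho i j})
    {i j l : Fin d} (h1 : G.Adj i j) (h2 : G.Adj j l)
    (hpos : 0 < a i + a j) (hneg : a j + a l < 0) : False := by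
  classical
  have hij := G.ne_of_adj h1
  have hjl := G.ne_of_adj h2
  have hil : i ≠ l := by
    rintro rfl
    have := hneg
    rw [add_comm] at this
    linarith
  set α := a i + a j with hα
  set β := a j + a l with hβ
  set lam := -β / (α - β) with hlam
  have hαβ : 0 < α - β := by linarith
  have h0 : 0 < lam := div_pos (by linarith) hαβ
  have hl1 : lam < 1 := (div_lt_one hαβ).mpr (by linarith)
  have hwP : lam • rho i j + (1 - lam) • rho j l ∈ edgePolytope G :=
    comb_mem_edgePolytope h1 h2 h0.le hl1.le
  have hw0 : dotp a (lam • rho i j + (1 - lam) • rho j l) = 0 := by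
    rw [dotp_comb, dotp_rho, dotp_rho, ← hα, ← hβ, hlam]
    field_simp
    ring
  set c : Fin d → ℝ := fun u => if u = j then 3/2 else if u = i ∨ u = l then 1/2 else 0 with hc
  refine no_hull G a hz c (3/2) ?_ hwP hw0 ?_
  · intro p q hpq hpq0
    have hpq' := G.ne_of_adj hpq
    by_cases hp : p = j
    · have hqj : q ≠ j := fun h => hpq' (hp.trans h.symm)
      have hqi : q ≠ i := by
        rintro rfl
        rw [hp, add_comm] at hpq0
        linarith
      have hql : q ≠ l := by
        rintro rfl
        rw [hp] at hpq0
        linarith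
      have e1 : c p = 3/2 := by simp [hc, hp]
      have e2 : c q = 0 := by simp [hc, hqj, hqi, hql]
      linarith
    · by_cases hq : q = j
      · have hpi : p ≠ i := by
          rintro rfl
          rw [hq] at hpq0
          linarith
        have hpl : p ≠ l := by
          rintro rfl
          rw [hq, add_comm] at hpq0
          linarith
        have e1 : c q = 3/2 := by simp [hc, hq]
        have e2 : c p = 0 := by simp [hc, hp, hpi, hpl]
        linarith
      · have e1 : c p ≤ 1/2 := by
          simp only [hc]; rw [if_neg hp]; split_ifs <;> norm_num
        have e2 : c q ≤ 1/2 := by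
          simp only [hc]; rw [if_neg hq]; split_ifs <;> norm_num
        linarith
  · have e : dotp c (lam • rho i j + (1 - lam) • rho j l)
        = lam * (c i + c j) + (1 - lam) * (c j + c l) := by
      rw [dotp_comb, dotp_rho, dotp_rho]
    rw [e]
    have ci : c i = 1/2 := by simp [hc, hij]
    have cj : c j = 3/2 := by simp [hc]
    have cl : c l = 1/2 := by simp [hc, hjl.symm, hil.symm]
    rw [ci, cj, cl]
    ring_nf
    linarith

lemma no_zero_star (G : SimpleGraph (Fin d)) (a : Fin d → ℝ)
    (hz : edgePolytope G ∩ {x | dotp a x = 0}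
      ⊆ convexHull ℝ {x | ∃ i j, G.Adj i j ∧ a i + a j = 0 ∧ x = rho i j})
    {i j k l v : Fin d}
    (hij : G.Adj i j) (hkl : G.Adj k l)
    (hd1 : i ≠ k) (hd2 : i ≠ l) (hd3 : j ≠ k) (hd4 : j ≠ l)
    (hpos : 0 < a i + a j) (hneg : a k + a l < 0)
    (hv : v = i ∨ v = j ∨ v = k ∨ v = l)
    (hstar : ∀ m, G.Adj v m → a v + a m = 0 → ¬(m = i ∨ m = j ∨ m = k ∨ m = l)) : False := by
  classical
  have hij' := G.ne_of_adj hij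
  have hkl' := G.ne_of_adj hkl
  set α := a i + a j with hα
  set β := a k + a l with hβ
  set lam := -β / (α - β) with hlam
  have hαβ : 0 < α - β := by linarith
  have h0 : 0 < lam := div_pos (by linarith) hαβ
  have hl1 : lam < 1 := (div_lt_one hαβ).mpr (by linarith)
  have hwP : lam • rho i j + (1 - lam) • rho k l ∈ edgePolytope G :=
    comb_mem_edgePolytope hij hkl h0.le hl1.le
  have hw0 : dotp a (lam • rho i j + (1 - lam) • rho k l) = 0 := by
    rw [dotp_comb, dotp_rho, dotp_rho, ← hα, ← hβ, hlam]
    field_simp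
    ring
  set c : Fin d → ℝ := fun u => if u = v then 3/2 else
    if u = i ∨ u = j ∨ u = k ∨ u = l then 1 else 0 with hc
  refine no_hull G a hz c 2 ?_ hwP hw0 ?_
  · intro p q hpq hpq0
    have hpq' := G.ne_of_adj hpq
    by_cases hp : p = v
    · have hq4 : ¬(q = i ∨ q = j ∨ q = k ∨ q = l) := by
        apply hstar q
        · rwa [← hp]
        · rwa [← hp]
      have hqv : q ≠ v := fun h => hpq' (hp.trans h.symm)
      have e1 : c p = 3/2 := by simp [hc, hp]
      have e2 : c q = 0 := by simp only [hc]; rw [if_neg hqv, if_neg hq4]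
      linarith
    · by_cases hq : q = v
      · have hp4 : ¬(p = i ∨ p = j ∨ p = k ∨ p = l) := by
          apply hstar p
          · rw [← hq]; exact hpq.symm
          · rw [← hq, add_comm]; exact hpq0
        have e1 : c q = 3/2 := by simp [hc, hq]
        have e2 : c p = 0 := by simp only [hc]; rw [if_neg hp, if_neg hp4]
        linarith
      · have e1 : c p ≤ 1 := by
          simp only [hc]; rw [if_neg hp]; split_ifs <;> norm_num
        have e2 : c q ≤ 1 := by
          simp only [hc]; rw [if_neg hq]; split_ifs <;> norm_num
        linarith
  · have e : dotp c (lam • rho i j + (1 - lam) • rho k l)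
        = lam * (c i + c j) + (1 - lam) * (c k + c l) := by
      rw [dotp_comb, dotp_rho, dotp_rho]
    rw [e]
    rcases hv with hv1 | hv1 | hv1 | hv1
    · have ci : c i = 3/2 := by simp [hc, hv1]
      have cj : c j = 1 := by simp [hc, hv1, hij'.symm]
      have ck : c k = 1 := by simp [hc, hv1, hd1.symm]
      have cl : c l = 1 := by simp [hc, hv1, hd2.symm]
      rw [ci, cj, ck, cl]; nlinarith
    · have ci : c i = 1 := by simp [hc, hv1, hij']
      have cj : c j = 3/2 := by simp [hc, hv1]
      have ck : c k = 1 := by simp [hc, hv1, hd3.symm]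
      have cl : c l = 1 := by simp [hc, hv1, hd4.symm]
      rw [ci, cj, ck, cl]; nlinarith
    · have ci : c i = 1 := by simp [hc, hv1, hd1]
      have cj : c j = 1 := by simp [hc, hv1, hd3]
      have ck : c k = 3/2 := by simp [hc, hv1]
      have cl : c l = 1 := by simp [hc, hv1, hkl'.symm]
      rw [ci, cj, ck, cl]; nlinarith
    · have ci : c i = 1 := by simp [hc, hv1, hd2]
      have cj : c j = 1 := by simp [hc, hv1, hd4]
      have ck : c k = 1 := by simp [hc, hv1, hkl']
      have cl : c l = 3/2 := by simp [hc, hv1]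
      rw [ci, cj, ck, cl]; nlinarith

end Aux4

section Aux5
variable {d : ℕ}

lemma exchange (G : SimpleGraph (Fin d)) (a : Fin d → ℝ)
    (hz : edgePolytope G ∩ {x | dotp a x = 0}
      ⊆ convexHull ℝ {x | ∃ i j, G.Adj i j ∧ a i + a j = 0 ∧ x = rho i j})
    {i j k l : Fin d} (hij : G.Adj i j) (hkl : G.Adj k l)
    (hpos : 0 < a i + a j) (hneg : a k + a l < 0) :
    ∃ p q r s, G.Adj p q ∧ G.Adj r s ∧ a p + a q = 0 ∧ a r + a s = 0 ∧
      rho i j + rho k l = rho p q + rho r s := by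
  have hd1 : i ≠ k := by
    rintro rfl
    exact no_mixed_shared G a hz hij.symm hkl (by rw [add_comm]; exact hpos) hneg
  have hd2 : i ≠ l := by
    rintro rfl
    exact no_mixed_shared G a hz hij.symm hkl.symm (by rw [add_comm]; exact hpos)
      (by rw [add_comm]; exact hneg)
  have hd3 : j ≠ k := by
    rintro rfl
    exact no_mixed_shared G a hz hij hkl hpos hneg
  have hd4 : j ≠ l := by
    rintro rfl
    exact no_mixed_shared G a hz hij hkl.symm hpos (by rw [add_comm]; exact hneg)
  by_cases h1 : G.Adj i k ∧ a i + a k = 0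
  · by_cases h2 : G.Adj j l ∧ a j + a l = 0
    · exact ⟨i, k, j, l, h1.1, h2.1, h1.2, h2.2, by funext t; simp [rho]; ring⟩
    · by_cases h3 : G.Adj i l ∧ a i + a l = 0
      · by_cases h4 : G.Adj j k ∧ a j + a k = 0
        · exact ⟨i, l, j, k, h3.1, h4.1, h3.2, h4.2, by funext t; simp [rho]; ring⟩
        · -- ¬(j l), ¬(j k) : v = j
          exfalso
          apply no_zero_star G a hz hij hkl hd1 hd2 hd3 hd4 hpos hneg (Or.inr (Or.inl rfl))
          intro m hjm hjm0
          rintro (rfl | rfl | rfl | rfl)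
          · rw [add_comm] at hjm0; linarith
          · exact (G.ne_of_adj hjm) rfl
          · exact h4 ⟨hjm, hjm0⟩
          · exact h2 ⟨hjm, hjm0⟩
      · -- ¬(j l), ¬(i l) : v = l
        exfalso
        apply no_zero_star G a hz hij hkl hd1 hd2 hd3 hd4 hpos hneg
          (Or.inr (Or.inr (Or.inr rfl)))
        intro m hlm hlm0
        rintro (rfl | rfl | rfl | rfl)
        · exact h3 ⟨hlm.symm, by rw [add_comm]; exact hlm0⟩
        · exact h2 ⟨hlm.symm, by rw [add_comm]; exact hlm0⟩
        · rw [add_comm] at hlm0; linarith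
        · exact (G.ne_of_adj hlm) rfl
  · by_cases h3 : G.Adj i l ∧ a i + a l = 0
    · by_cases h4 : G.Adj j k ∧ a j + a k = 0
      · exact ⟨i, l, j, k, h3.1, h4.1, h3.2, h4.2, by funext t; simp [rho]; ring⟩
      · -- ¬(i k), ¬(j k) : v = k
        exfalso
        apply no_zero_star G a hz hij hkl hd1 hd2 hd3 hd4 hpos hneg
          (Or.inr (Or.inr (Or.inl rfl)))
        intro m hkm hkm0
        rintro (rfl | rfl | rfl | rfl)
        · exact h1 ⟨hkm.symm, by rw [add_comm]; exact hkm0⟩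
        · exact h4 ⟨hkm.symm, by rw [add_comm]; exact hkm0⟩
        · exact (G.ne_of_adj hkm) rfl
        · linarith
    · -- ¬(i k), ¬(i l) : v = i
      exfalso
      apply no_zero_star G a hz hij hkl hd1 hd2 hd3 hd4 hpos hneg (Or.inl rfl)
      intro m him him0
      rintro (rfl | rfl | rfl | rfl)
      · exact (G.ne_of_adj him) rfl
      · linarith
      · exact h1 ⟨him, him0⟩
      · exact h3 ⟨him, him0⟩

end Aux5

section Aux6
variable {d : ℕ}

lemma fix_signs (G : SimpleGraph (Fin d)) (a : Fin d → ℝ)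
    (hz : edgePolytope G ∩ {x | dotp a x = 0}
      ⊆ convexHull ℝ {x | ∃ i j, G.Adj i j ∧ a i + a j = 0 ∧ x = rho i j})
    (N : ℕ) :
    ∀ (n : ℕ) (f : Fin N → Fin d → ℝ),
      (∀ m, ∃ i j, G.Adj i j ∧ f m = rho i j) →
      (Finset.univ.filter fun m => dotp a (f m) < 0).card ≤ n →
      0 ≤ dotp a (∑ m, f m) →
      ∃ g : Fin N → Fin d → ℝ,
        (∀ m, ∃ i j, G.Adj i j ∧ 0 ≤ a i + a j ∧ g m = rho i j) ∧ (∑ m, g m) = ∑ m, f m := by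
  intro n
  induction n with
  | zero =>
    intro f hf hcard _
    have hempty : ∀ m, ¬ dotp a (f m) < 0 := by
      intro m hm
      have h1 : m ∈ Finset.univ.filter fun m => dotp a (f m) < 0 := by
        simp [Finset.mem_filter, hm]
      have h2 : (Finset.univ.filter fun m => dotp a (f m) < 0) = ∅ :=
        Finset.card_eq_zero.mp (Nat.le_zero.mp hcard)
      rw [h2] at h1
      exact absurd h1 (Finset.notMem_empty m)
    refine ⟨f, fun m => ?_, rfl⟩
    obtain ⟨i, j, hadj, hfm⟩ := hf m
    have := hempty m
    rw [hfm, dotp_rho] at this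
    exact ⟨i, j, hadj, by linarith, hfm⟩
  | succ n ih =>
    intro f hf hcard hpos
    by_cases hneg : ∃ p, dotp a (f p) < 0
    · obtain ⟨p, hp⟩ := hneg
      have hq : ∃ q, 0 < dotp a (f q) := by
        by_contra hq
        push_neg at hq
        have hlt : ∑ m, dotp a (f m) < ∑ _m : Fin N, (0:ℝ) :=
          Finset.sum_lt_sum (fun m _ => hq m) ⟨p, Finset.mem_univ p, hp⟩
        rw [Finset.sum_const, smul_zero] at hlt
        rw [dotp_sum] at hpos
        linarith
      obtain ⟨q, hq⟩ := hq
      have hpq : p ≠ q := by rintro rfl; linarith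
      obtain ⟨k, l, hkl, hfp⟩ := hf p
      obtain ⟨i, j, hij, hfq⟩ := hf q
      have hknl : a k + a l < 0 := by rw [hfp, dotp_rho] at hp; exact hp
      have hipj : 0 < a i + a j := by rw [hfq, dotp_rho] at hq; exact hq
      obtain ⟨p', q', r', s', h1, h2, hz1, hz2, hsum4⟩ := exchange G a hz hij hkl hipj hknl
      set f' : Fin N → Fin d → ℝ :=
        Function.update (Function.update f p (rho r' s')) q (rho p' q') with hf'def
      have hf'p : f' p = rho r' s' := by
        rw [hf'def, Function.update_of_ne hpq, Function.update_self]
      have hf'q : f' q = rho p' q' := by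
        rw [hf'def, Function.update_self]
      have hf'other : ∀ m, m ≠ p → m ≠ q → f' m = f m := by
        intro m hmp hmq
        rw [hf'def, Function.update_of_ne hmq, Function.update_of_ne hmp]
      have hf'edges : ∀ m, ∃ i' j', G.Adj i' j' ∧ f' m = rho i' j' := by
        intro m
        by_cases hm1 : m = q
        · subst hm1; exact ⟨p', q', h1, hf'q⟩
        · by_cases hm2 : m = p
          · subst hm2; exact ⟨r', s', h2, hf'p⟩
          · obtain ⟨i', j', hadj, hfm⟩ := hf m
            exact ⟨i', j', hadj, by rw [hf'other m hm2 hm1]; exact hfm⟩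
      have hsum' : ∑ m, f' m = ∑ m, f m := by
        have e1 : ∑ m, f' m = f' q + ∑ m ∈ Finset.univ.erase q, f' m :=
          (Finset.add_sum_erase _ _ (Finset.mem_univ q)).symm
        have e2 : ∑ m ∈ Finset.univ.erase q, f' m
            = f' p + ∑ m ∈ (Finset.univ.erase q).erase p, f' m :=
          (Finset.add_sum_erase _ _ (Finset.mem_erase.mpr ⟨hpq, Finset.mem_univ p⟩)).symm
        have e3 : ∑ m, f m = f q + ∑ m ∈ Finset.univ.erase q, f m :=
          (Finset.add_sum_erase _ _ (Finset.mem_univ q)).symm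
        have e4 : ∑ m ∈ Finset.univ.erase q, f m
            = f p + ∑ m ∈ (Finset.univ.erase q).erase p, f m :=
          (Finset.add_sum_erase _ _ (Finset.mem_erase.mpr ⟨hpq, Finset.mem_univ p⟩)).symm
        have e5 : ∑ m ∈ (Finset.univ.erase q).erase p, f' m
            = ∑ m ∈ (Finset.univ.erase q).erase p, f m := by
          refine Finset.sum_congr rfl fun m hm => ?_
          rw [Finset.mem_erase, Finset.mem_erase] at hm
          exact hf'other m hm.1 hm.2.1
        rw [e1, e2, e3, e4, e5, hf'q, hf'p, hfq, hfp]
        have : rho p' q' + rho r' s' = rho i j + rho k l := hsum4.symm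
        rw [← add_assoc, ← add_assoc, this]
      have hcard' : (Finset.univ.filter fun m => dotp a (f' m) < 0).card ≤ n := by
        have hsub : (Finset.univ.filter fun m => dotp a (f' m) < 0)
            ⊆ (Finset.univ.filter fun m => dotp a (f m) < 0).erase p := by
          intro m hm
          rw [Finset.mem_filter] at hm
          by_cases hm1 : m = q
          · exfalso
            rw [hm1, hf'q, dotp_rho, hz1] at hm
            exact lt_irrefl 0 hm.2
          · by_cases hm2 : m = p
            · exfalso
              rw [hm2, hf'p, dotp_rho, hz2] at hm
              exact lt_irrefl 0 hm.2
            · rw [Finset.mem_erase, Finset.mem_filter]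
              rw [hf'other m hm2 hm1] at hm
              exact ⟨hm2, Finset.mem_univ m, hm.2⟩
        have hpmem : p ∈ Finset.univ.filter fun m => dotp a (f m) < 0 := by
          simp [Finset.mem_filter, hp]
        calc (Finset.univ.filter fun m => dotp a (f' m) < 0).card
            ≤ ((Finset.univ.filter fun m => dotp a (f m) < 0).erase p).card :=
              Finset.card_le_card hsub
          _ = (Finset.univ.filter fun m => dotp a (f m) < 0).card - 1 :=
              Finset.card_erase_of_mem hpmem
          _ ≤ n := by omega
      obtain ⟨g, hg, hgsum⟩ := ih f' hf'edges hcard' (by rw [hsum']; exact hpos)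
      exact ⟨g, hg, hgsum.trans hsum'⟩
    · push_neg at hneg
      refine ⟨f, fun m => ?_, rfl⟩
      obtain ⟨i, j, hadj, hfm⟩ := hf m
      have := hneg m
      rw [hfm, dotp_rho] at this
      exact ⟨i, j, hadj, this, hfm⟩

end Aux6


section Aux7
variable {d : ℕ}

lemma main_fwd (G : SimpleGraph (Fin d)) (a : Fin d → ℝ)
    (hip : IsIntegralSet (edgePolytope G ∩ {x | 0 ≤ dotp a x}))
    (hnorm : IsNormalPolytope (edgePolytope G)) :
    IsNormalPolytope (edgePolytope
      (SimpleGraph.fromRel fun i j => G.Adj i j ∧ 0 ≤ a i + a j)) := by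
  intro N hN x hx hxint
  have hPp := half_eq G a hip
  obtain ⟨y, hy, hxy⟩ := Set.mem_smul_set.mp hx
  rw [← hPp] at hy
  have hxP : x ∈ (N : ℝ) • edgePolytope G := Set.mem_smul_set.mpr ⟨y, hy.1, hxy⟩
  obtain ⟨f, hf, hsum⟩ := hnorm N hN x hxP hxint
  have hedges : ∀ m, ∃ i j, G.Adj i j ∧ f m = rho i j := fun m =>
    lattice_of_mem_hull G (hf m).1 (hf m).2
  have hx0 : 0 ≤ dotp a (∑ m, f m) := by
    rw [← hsum, ← hxy, dotp_smul]
    exact mul_nonneg (Nat.cast_nonneg N) hy.2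
  obtain ⟨g, hg, hgsum⟩ := fix_signs G a (zero_subset G a hip) N
    (Finset.univ.filter fun m => dotp a (f m) < 0).card f hedges le_rfl hx0
  refine ⟨g, fun m => ?_, ?_⟩
  · obtain ⟨i, j, hadj, hsign, hgm⟩ := hg m
    constructor
    · rw [hgm]
      exact mem_edgePolytope_of_adj
        ((SimpleGraph.fromRel_adj _ i j).mpr ⟨G.ne_of_adj hadj, Or.inl ⟨hadj, hsign⟩⟩)
    · intro t; rw [hgm]; exact rho_lattice i j t
  · rw [hsum, ← hgsum]

end Aux7


theorem stmt14' {d : ℕ} (G : SimpleGraph (Fin d)) (a : Fin d → ℝ)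
    (hip : IsIntegralSet (edgePolytope G ∩ {x | 0 ≤ dotp a x}))
    (him : IsIntegralSet (edgePolytope G ∩ {x | dotp a x ≤ 0})) :
    IsNormalPolytope (edgePolytope G) ↔
      (IsNormalPolytope (edgePolytope
          (SimpleGraph.fromRel fun i j => G.Adj i j ∧ 0 ≤ a i + a j)) ∧
       IsNormalPolytope (edgePolytope
          (SimpleGraph.fromRel fun i j => G.Adj i j ∧ a i + a j ≤ 0))) := by
  have hsetm : {x : Fin d → ℝ | 0 ≤ dotp (-a) x} = {x | dotp a x ≤ 0} := by
    ext x; simp [dotp_neg, neg_nonneg]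
  have hipm : IsIntegralSet (edgePolytope G ∩ {x | 0 ≤ dotp (-a) x}) := by
    rw [hsetm]; exact him
  have hrelm : (SimpleGraph.fromRel fun i j => G.Adj i j ∧ 0 ≤ (-a) i + (-a) j)
      = SimpleGraph.fromRel fun i j => G.Adj i j ∧ a i + a j ≤ 0 := by
    congr 1
    funext i j
    apply propext
    constructor
    · rintro ⟨h1, h2⟩
      simp only [Pi.neg_apply] at h2
      exact ⟨h1, by linarith⟩
    · rintro ⟨h1, h2⟩
      simp only [Pi.neg_apply]
      exact ⟨h1, by linarith⟩
  have hPp := half_eq G a hip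
  have hPm : edgePolytope G ∩ {x | dotp a x ≤ 0}
      = edgePolytope (SimpleGraph.fromRel fun i j => G.Adj i j ∧ a i + a j ≤ 0) := by
    have := half_eq G (-a) hipm
    rw [hsetm, hrelm] at this
    exact this
  constructor
  · intro h
    constructor
    · exact main_fwd G a hip h
    · have := main_fwd G (-a) hipm h
      rwa [hrelm] at this
  · rintro ⟨hp, hm⟩
    intro N hN x hx hxint
    obtain ⟨y, hyP, hxy⟩ := Set.mem_smul_set.mp hx
    rcases le_total 0 (dotp a y) with hcase | hcase
    · have hyp : y ∈ edgePolytope G ∩ {x | 0 ≤ dotp a x} := ⟨hyP, hcase⟩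
      rw [hPp] at hyp
      obtain ⟨f, hf, hsum⟩ := hp N hN x (Set.mem_smul_set.mpr ⟨y, hyp, hxy⟩) hxint
      refine ⟨f, fun m => ⟨?_, (hf m).2⟩, hsum⟩
      have h1 := (hf m).1
      rw [← hPp] at h1
      exact h1.1
    · have hyp : y ∈ edgePolytope G ∩ {x | dotp a x ≤ 0} := ⟨hyP, hcase⟩
      rw [hPm] at hyp
      obtain ⟨f, hf, hsum⟩ := hm N hN x (Set.mem_smul_set.mpr ⟨y, hyp, hxy⟩) hxint
      refine ⟨f, fun m => ⟨?_, (hf m).2⟩, hsum⟩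
      have h1 := (hf m).1
      rw [← hPm] at h1
      exact h1.1

/-- in a decomposition P_G = P_{G_+} ∪ P_{G_-}, the edge polytope P_G is
normal iff both P_{G_+} and P_{G_-} are normal. -/
theorem stmt14 {d : ℕ} (G : SimpleGraph (Fin d)) (hG : G.Connected) (a : Fin d → ℝ)
    (hdec : Decomposes (edgePolytope G) a 0) :
    IsNormalPolytope (edgePolytope G) ↔
      (IsNormalPolytope (edgePolytope
          (SimpleGraph.fromRel fun i j => G.Adj i j ∧ 0 ≤ a i + a j)) ∧
       IsNormalPolytope (edgePolytope
          (SimpleGraph.fromRel fun i j => G.Adj i j ∧ a i + a j ≤ 0))) := by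
  obtain ⟨-, -, -, hip, him⟩ := hdec
  simpa using stmt14' G a hip him
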